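/- If 𝔭 and 𝔮 are distinct minimal prime ideals of a commutative ring A, then A_𝔭 ⊗_A A_𝔮 = 0. -/

import Mathlib

open scoped TensorProduct

theorem tensor_localizations_distinct_minimal_primes (A : Type*) [CommRing A]
    (p q : Ideal A) (hp : p ∈ minimalPrimes A) (hq : q ∈ minimalPrimes A) (hpq : p ≠ q)
    [p.IsPrime] [q.IsPrime] :
    Subsingleton (Localization.AtPrime p ⊗[A] Localization.AtPrime q) := by
  -- p is not contained in q
  have hle : ¬ p ≤ q := fun h => hpq (le_antisymm h (hq.2 ⟨‹p.IsPrime›, bot_le⟩ h))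
  obtain ⟨x, hxp, hxq⟩ := SetLike.not_le_iff_exists.mp hle
  set T := Localization.AtPrime p ⊗[A] Localization.AtPrime q
  have h1 : IsNilpotent (algebraMap A T x) := by
    have hnil : IsNilpotent (algebraMap A (Localization.AtPrime p) x) :=
by
      have h := IsLocalization.AtPrime.radical_map_of_mem_minimalPrimes
        (Localization.AtPrime p) p ⊥ hp
      have hm : algebraMap A (Localization.AtPrime p) x ∈
          p.map (algebraMap A (Localization.AtPrime p)) := Ideal.mem_map_of_mem _ hxp
      rw [← h, Ideal.map_bot] at hm
      exact mem_nilradical.mp hm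
    have := hnil.map (Algebra.TensorProduct.includeLeft
      (R := A) (S := A) (B := Localization.AtPrime q))
    rwa [Algebra.TensorProduct.includeLeft_apply, ← Algebra.TensorProduct.algebraMap_apply] at this
  have h2 : IsUnit (algebraMap A T x) := by
    have hu : IsUnit (algebraMap A (Localization.AtPrime q) x) :=
      (IsLocalization.AtPrime.isUnit_to_map_iff _ q x).mpr hxq
    have := hu.map (Algebra.TensorProduct.includeRight
      (R := A) (A := Localization.AtPrime p) (B := Localization.AtPrime q))
    rwa [Algebra.TensorProduct.includeRight_apply, ← Algebra.TensorProduct.algebraMap_apply'] at this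
  by_contra h
  rw [not_subsingleton_iff_nontrivial] at h
  exact h1.not_isUnit h2
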